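/- (Talagrand's inequality) There is a universal constant C such that for every finite set J and every f: {0,1}^J → ℝ, Var(f) ≤ C Σ_{j∈J} ‖ρ_j f‖_2^2 / (1 + log(‖ρ_j f‖_2/‖ρ_j f‖_1)), where ρ_j f := (f - f∘σ_j)/2, and terms with ρ_j f ≡ 0 are interpreted as 0. -/

import Mathlib

open Finset
open scoped symmDiff
set_option linter.unusedSectionVars false

/-- Expectation with respect to the uniform measure on `{0,1}^J`. -/
noncomputable def hcExp {J : Type*} [Fintype J] [DecidableEq J] (f : (J → Bool) → ℝ) : ℝ :=
  (∑ x : J → Bool, f x) / 2 ^ Fintype.card J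

/-- The Walsh function `u_S(ω) = (-1)^{Σ_{s∈S} ω_s}`. -/
def walsh {J : Type*} (S : Finset J) (x : J → Bool) : ℝ :=
  (-1 : ℝ) ^ (S.filter fun s => x s = true).card

/-- The Fourier-Walsh coefficient `\hat f(S) = E[f ⬝ u_S]`. -/
noncomputable def fcoef {J : Type*} [Fintype J] [DecidableEq J] (f : (J → Bool) → ℝ) (S : Finset J) : ℝ :=
  hcExp fun x => f x * walsh S x

/-- The discrete derivative `ρ_j f = (f - f∘σ_j)/2`, where `σ_j` flips coordinate `j`. -/
noncomputable def rhoD {J : Type*} [DecidableEq J] (j : J) (f : (J → Bool) → ℝ) :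
    (J → Bool) → ℝ :=
  fun x => (f x - f (Function.update x j (!x j))) / 2

/-- The `L^q` norm with respect to the uniform measure on `{0,1}^J`. -/
noncomputable def lqNorm {J : Type*} [Fintype J] [DecidableEq J] (q : ℝ)
    (f : (J → Bool) → ℝ) : ℝ :=
  (hcExp fun x => |f x| ^ q) ^ (1 / q)

/-- The variance with respect to the uniform measure on `{0,1}^J`. -/
noncomputable def hcVar {J : Type*} [Fintype J] [DecidableEq J]
    (f : (J → Bool) → ℝ) : ℝ :=
  hcExp fun x => (f x - hcExp f) ^ 2

section Talagrand
variable {J : Type*} [Fintype J] [DecidableEq J]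

lemma walsh_eq_prod (S : Finset J) (x : J → Bool) :
    walsh S x = ∏ j ∈ S, (if x j = true then (-1:ℝ) else 1) := by
  rw [walsh, Finset.prod_ite, Finset.prod_const, Finset.prod_const, one_pow, mul_one]

lemma walsh_empty (x : J → Bool) : walsh (∅ : Finset J) x = 1 := by simp [walsh]

lemma walsh_mul (S T : Finset J) (x : J → Bool) :
    walsh S x * walsh T x = walsh (S ∆ T) x := by
  simp only [walsh_eq_prod]
  have hsq : ∀ A : Finset J, (∏ j ∈ A, (if x j = true then (-1:ℝ) else 1)) * ∏ j ∈ A, (if x j = true then (-1:ℝ) else 1) = 1 := by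
    intro A
    rw [← Finset.prod_mul_distrib]
    apply Finset.prod_eq_one
    intro j _
    by_cases h : x j = true <;> simp [h]
  rw [symmDiff_def, Finset.sup_eq_union,
    Finset.prod_union disjoint_sdiff_sdiff,
    ← Finset.prod_inter_mul_prod_diff S T, ← Finset.prod_inter_mul_prod_diff T S,
    Finset.inter_comm T S]
  calc ((∏ j ∈ S ∩ T, (if x j = true then (-1:ℝ) else 1)) * ∏ j ∈ S \ T, (if x j = true then (-1:ℝ) else 1)) * ((∏ j ∈ S ∩ T, (if x j = true then (-1:ℝ) else 1)) * ∏ j ∈ T \ S, (if x j = true then (-1:ℝ) else 1))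
      = ((∏ j ∈ S ∩ T, (if x j = true then (-1:ℝ) else 1)) * ∏ j ∈ S ∩ T, (if x j = true then (-1:ℝ) else 1)) * ((∏ j ∈ S \ T, (if x j = true then (-1:ℝ) else 1)) * ∏ j ∈ T \ S, (if x j = true then (-1:ℝ) else 1)) := by ring
    _ = _ := by rw [hsq, one_mul]

lemma walsh_sq (S : Finset J) (x : J → Bool) : walsh S x * walsh S x = 1 := by
  rw [walsh_mul, symmDiff_self]
  exact walsh_empty x

lemma walsh_update_not_mem {S : Finset J} {j : J} (hj : j ∉ S) (x : J → Bool) (b : Bool) :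
    walsh S (Function.update x j b) = walsh S x := by
  simp only [walsh_eq_prod]
  apply Finset.prod_congr rfl
  intro i hi
  have hij : i ≠ j := fun h => hj (h ▸ hi)
  rw [Function.update_of_ne hij]

lemma walsh_update_mem {S : Finset J} {j : J} (hj : j ∈ S) (x : J → Bool) :
    walsh S (Function.update x j (!x j)) = - walsh S x := by
  simp only [walsh_eq_prod]
  rw [Finset.prod_eq_mul_prod_sdiff_singleton_of_mem hj, Finset.prod_eq_mul_prod_sdiff_singleton_of_mem hj
    (fun i => if x i = true then (-1:ℝ) else 1)]
  have h1 : ∀ i ∈ S \ {j}, (if Function.update x j (!x j) i = true then (-1:ℝ) else 1)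
      = if x i = true then (-1:ℝ) else 1 := by
    intro i hi
    have hij : i ≠ j := by
      have := (Finset.mem_sdiff.mp hi).2
      simpa using this
    rw [Function.update_of_ne hij]
  rw [Finset.prod_congr rfl h1, Function.update_self]
  have : (if (!x j) = true then (-1:ℝ) else 1) = -(if x j = true then (-1:ℝ) else 1) := by
    cases h : x j <;> simp [h]
  rw [this]; ring

lemma sum_walsh (S : Finset J) :
    (∑ x : J → Bool, walsh S x) = if S = ∅ then (2:ℝ) ^ (Fintype.card J) else 0 := by
  rcases eq_or_ne S ∅ with rfl | hS
  · simp only [walsh_empty, Finset.sum_const, Finset.card_univ, Fintype.card_fun,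
      Fintype.card_bool, nsmul_eq_mul, mul_one, if_true]
    push_cast
    ring
  · rw [if_neg hS]
    obtain ⟨j, hj⟩ := Finset.nonempty_iff_ne_empty.mpr hS
    apply Finset.sum_ninvolution (g := fun x => Function.update x j (!x j))
    · intro x
      rw [walsh_update_mem hj]; ring
    · intro x hx
      intro h
      have := congrFun h j
      simp at this
    · intro x; exact Finset.mem_univ _
    · intro x
      funext i
      rcases eq_or_ne i j with rfl | hij
      · simp
      · simp [Function.update_of_ne hij]

lemma sum_walsh_mul_walsh (S T : Finset J) :
    (∑ x : J → Bool, walsh S x * walsh T x) = if S = T then (2:ℝ) ^ (Fintype.card J) else 0 := by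
  simp only [walsh_mul]
  rw [sum_walsh]
  have : (S ∆ T = ∅) ↔ S = T := by
    rw [← Finset.bot_eq_empty, symmDiff_eq_bot]
  simp only [this]

lemma sum_walsh_walsh (x y : J → Bool) :
    (∑ S : Finset J, walsh S x * walsh S y) = if x = y then (2:ℝ) ^ (Fintype.card J) else 0 := by
  have hrw : ∀ S : Finset J, walsh S x * walsh S y
      = ∏ j ∈ S, ((if x j = true then (-1:ℝ) else 1) * (if y j = true then (-1:ℝ) else 1)) := by
    intro S; rw [walsh_eq_prod, walsh_eq_prod, ← Finset.prod_mul_distrib]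
  simp only [hrw]
  have hpa := Finset.prod_add
    (fun j => (if x j = true then (-1:ℝ) else 1) * (if y j = true then (-1:ℝ) else 1))
    (fun _ => (1:ℝ)) Finset.univ
  rw [Finset.powerset_univ] at hpa
  simp only [Finset.prod_const_one, mul_one] at hpa
  rw [← hpa]
  rcases eq_or_ne x y with rfl | hxy
  · rw [if_pos rfl]
    have h2 : ∀ j : J, ((if x j = true then (-1:ℝ) else 1) * (if x j = true then (-1:ℝ) else 1) + 1) = 2 := by
      intro j; cases h : x j <;> simp [h] <;> norm_num
    rw [Finset.prod_congr rfl (fun j _ => h2 j), Finset.prod_const, Finset.card_univ]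
  · rw [if_neg hxy]
    obtain ⟨j, hj⟩ : ∃ j, x j ≠ y j := by
      by_contra h; push_neg at h; exact hxy (funext h)
    apply Finset.prod_eq_zero (Finset.mem_univ j)
    cases hx : x j <;> cases hy : y j <;> simp [hx, hy] at hj ⊢

lemma sum_mul_walsh (f : (J → Bool) → ℝ) (S : Finset J) :
    (∑ x : J → Bool, f x * walsh S x) = (2:ℝ) ^ (Fintype.card J) * fcoef f S := by
  rw [fcoef, hcExp]
  field_simp

lemma sum_expand_mul_walsh (c : Finset J → ℝ) (T : Finset J) :
    (∑ x : J → Bool, (∑ S : Finset J, c S * walsh S x) * walsh T x)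
      = (2:ℝ) ^ (Fintype.card J) * c T := by
  simp only [Finset.sum_mul]
  rw [Finset.sum_comm]
  have h1 : ∀ S : Finset J, (∑ x : J → Bool, c S * walsh S x * walsh T x)
      = c S * ∑ x : J → Bool, walsh S x * walsh T x := by
    intro S; rw [Finset.mul_sum]; apply Finset.sum_congr rfl; intros; ring
  simp only [h1, sum_walsh_mul_walsh]
  simp only [mul_ite, mul_zero]
  rw [Finset.sum_ite_eq' Finset.univ T]
  simp [mul_comm]

lemma fcoef_expand (c : Finset J → ℝ) (T : Finset J) :
    fcoef (fun x => ∑ S : Finset J, c S * walsh S x) T = c T := by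
  have := sum_expand_mul_walsh c T
  rw [sum_mul_walsh] at this
  have h2n : ((2:ℝ) ^ (Fintype.card J)) ≠ 0 := by positivity
  exact mul_left_cancel₀ h2n this

lemma sum_mul_expand (g : (J → Bool) → ℝ) (c : Finset J → ℝ) :
    (∑ x : J → Bool, g x * (∑ S : Finset J, c S * walsh S x))
      = (2:ℝ) ^ (Fintype.card J) * ∑ S : Finset J, c S * fcoef g S := by
  have h1 : ∀ x : J → Bool, g x * (∑ S : Finset J, c S * walsh S x)
      = ∑ S : Finset J, c S * (g x * walsh S x) := by
    intro x; rw [Finset.mul_sum]; apply Finset.sum_congr rfl; intros; ring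
  simp only [h1]
  rw [Finset.sum_comm]
  have h2 : ∀ S : Finset J, (∑ x : J → Bool, c S * (g x * walsh S x))
      = c S * ((2:ℝ) ^ (Fintype.card J) * fcoef g S) := by
    intro S; rw [← Finset.mul_sum, sum_mul_walsh]
  simp only [h2]
  rw [Finset.mul_sum]
  apply Finset.sum_congr rfl; intros; ring

lemma fourier_inversion (f : (J → Bool) → ℝ) (x : J → Bool) :
    f x = ∑ S : Finset J, fcoef f S * walsh S x := by
  have h2n : ((2:ℝ) ^ (Fintype.card J)) ≠ 0 := by positivity
  have h1 : ∀ S : Finset J, fcoef f S * walsh S x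
      = (∑ y : J → Bool, f y * (walsh S y * walsh S x)) / 2 ^ (Fintype.card J) := by
    intro S
    rw [fcoef, hcExp, div_mul_eq_mul_div]
    congr 1
    rw [Finset.sum_mul]
    apply Finset.sum_congr rfl; intros; ring
  simp only [h1]
  rw [← Finset.sum_div]
  rw [Finset.sum_comm]
  have h2 : ∀ y : J → Bool, (∑ S : Finset J, f y * (walsh S y * walsh S x))
      = f y * (if y = x then (2:ℝ) ^ (Fintype.card J) else 0) := by
    intro y; rw [← Finset.mul_sum, sum_walsh_walsh]
  simp only [h2, mul_ite, mul_zero]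
  rw [Finset.sum_ite_eq' Finset.univ x]
  simp [h2n]

lemma sum_sq_eq_parseval (f : (J → Bool) → ℝ) :
    (∑ x : J → Bool, f x ^ 2) = (2:ℝ) ^ (Fintype.card J) * ∑ S : Finset J, fcoef f S ^ 2 := by
  have h1 : ∀ x : J → Bool, f x ^ 2 = f x * (∑ S : Finset J, fcoef f S * walsh S x) := by
    intro x; rw [← fourier_inversion]; ring
  simp only [h1]
  rw [sum_mul_expand]
  congr 1
  apply Finset.sum_congr rfl; intros; ring

lemma fcoef_empty (f : (J → Bool) → ℝ) : fcoef f ∅ = hcExp f := by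
  rw [fcoef]
  congr 1
  funext x
  rw [walsh_empty, mul_one]

lemma hcExp_sq (f : (J → Bool) → ℝ) :
    hcExp (fun x => f x ^ 2) = ∑ S : Finset J, fcoef f S ^ 2 := by
  rw [hcExp, sum_sq_eq_parseval]
  field_simp

lemma hcVar_eq (f : (J → Bool) → ℝ) :
    hcVar f = ∑ S ∈ Finset.univ.erase (∅ : Finset J), fcoef f S ^ 2 := by
  have hconst : ∀ a : ℝ, hcExp (fun _ : J → Bool => a) = a := by
    intro a
    rw [hcExp]
    rw [Finset.sum_const, Finset.card_univ, Fintype.card_fun, Fintype.card_bool]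
    rw [nsmul_eq_mul]
    push_cast
    field_simp
  have hvar : hcVar f = hcExp (fun x => f x ^ 2) - (hcExp f) ^ 2 := by
    rw [hcVar]
    have : ∀ x : J → Bool, (f x - hcExp f) ^ 2 = f x ^ 2 - (2 * hcExp f) * f x + (hcExp f)^2 := by
      intro x; ring
    simp only [this]
    rw [hcExp, hcExp, hcExp]
    simp only [Finset.sum_add_distrib, Finset.sum_sub_distrib, ← Finset.mul_sum]
    rw [Finset.sum_const, Finset.card_univ, Fintype.card_fun, Fintype.card_bool]
    rw [nsmul_eq_mul]
    have h2n : ((2:ℝ) ^ (Fintype.card J)) ≠ 0 := by positivity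
    push_cast
    field_simp
    ring
  rw [hvar, hcExp_sq, ← fcoef_empty]
  have := Finset.sum_erase_add Finset.univ (fun S : Finset J => fcoef f S ^ 2)
    (Finset.mem_univ (∅ : Finset J))
  beta_reduce at this
  linarith [this]

lemma flip_involutive (j : J) :
    Function.Involutive (fun x : J → Bool => Function.update x j (!x j)) := by
  intro x
  funext i
  rcases eq_or_ne i j with rfl | hij
  · simp
  · simp [Function.update_of_ne hij]

lemma fcoef_rhoD (j : J) (f : (J → Bool) → ℝ) (S : Finset J) :
    fcoef (rhoD j f) S = if j ∈ S then fcoef f S else 0 := by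
  have h2n : ((2:ℝ) ^ (Fintype.card J)) ≠ 0 := by positivity
  set σ : (J → Bool) → (J → Bool) := fun x => Function.update x j (!x j) with hσdef
  have hσ : Function.Involutive σ := flip_involutive j
  have key : (∑ x : J → Bool, f (σ x) * walsh S x)
      = (if j ∈ S then (-1:ℝ) else 1) * ∑ x : J → Bool, f x * walsh S x := by
    have hcomp := Equiv.sum_comp (Function.Involutive.toPerm σ hσ) (fun x => f (σ x) * walsh S x)
    have h1 : ∀ x : J → Bool, f (σ (σ x)) * walsh S (σ x)
        = f x * ((if j ∈ S then (-1:ℝ) else 1) * walsh S x) := by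
      intro x
      rw [hσ x]
      congr 1
      by_cases hj : j ∈ S
      · rw [if_pos hj, hσdef]
        simp only []
        rw [walsh_update_mem hj]
        ring
      · rw [if_neg hj, hσdef]
        simp only []
        rw [walsh_update_not_mem hj]
        ring
    have h2 : ∀ x : J → Bool, (fun x => f (σ x) * walsh S x) ((Function.Involutive.toPerm σ hσ) x)
        = f x * ((if j ∈ S then (-1:ℝ) else 1) * walsh S x) := by
      intro x
      exact h1 x
    rw [← hcomp]
    rw [Finset.sum_congr rfl (fun x _ => h2 x)]
    rw [Finset.mul_sum]
    apply Finset.sum_congr rfl; intros; ring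
  rw [fcoef, fcoef, hcExp, hcExp]
  have hexpand : (∑ x : J → Bool, rhoD j f x * walsh S x)
      = ((∑ x : J → Bool, f x * walsh S x) - ∑ x : J → Bool, f (σ x) * walsh S x) / 2 := by
    rw [← Finset.sum_sub_distrib, Finset.sum_div]
    apply Finset.sum_congr rfl
    intro x _
    simp only [rhoD, hσdef]
    ring
  rw [hexpand, key]
  by_cases hj : j ∈ S
  · rw [if_pos hj, if_pos hj]
    ring
  · rw [if_neg hj, if_neg hj]
    ring

lemma hcExp_nonneg {f : (J → Bool) → ℝ} (h : ∀ x, 0 ≤ f x) : 0 ≤ hcExp f := by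
  rw [hcExp]
  apply div_nonneg (Finset.sum_nonneg fun x _ => h x) (by positivity)

lemma hcExp_mono {f g : (J → Bool) → ℝ} (h : ∀ x, f x ≤ g x) : hcExp f ≤ hcExp g := by
  rw [hcExp, hcExp]
  exact (div_le_div_iff_of_pos_right (by positivity)).mpr (Finset.sum_le_sum fun x _ => h x)

lemma hcExp_cauchy (u v : (J → Bool) → ℝ) :
    hcExp (fun x => u x * v x) ^ 2 ≤ hcExp (fun x => u x ^ 2) * hcExp (fun x => v x ^ 2) := by
  rw [hcExp, hcExp, hcExp, div_pow, div_mul_div_comm, pow_two ((2:ℝ) ^ Fintype.card J)]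
  exact (div_le_div_iff_of_pos_right (by positivity)).mpr (Finset.sum_mul_sq_le_sq_mul_sq _ _ _)

lemma hcExp_congr {f g : (J → Bool) → ℝ} (h : ∀ x, f x = g x) : hcExp f = hcExp g := by
  rw [hcExp, hcExp]; congr 1; exact Finset.sum_congr rfl fun x _ => h x

lemma hcExp_const (a : ℝ) : hcExp (fun _ : J → Bool => a) = a := by
  rw [hcExp, Finset.sum_const, Finset.card_univ, Fintype.card_fun, Fintype.card_bool,
    nsmul_eq_mul]
  push_cast
  field_simp

lemma hcExp_add (f g : (J → Bool) → ℝ) :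
    hcExp (fun x => f x + g x) = hcExp f + hcExp g := by
  rw [hcExp, hcExp, hcExp, Finset.sum_add_distrib, add_div]

lemma hcExp_cmul (r : ℝ) (f : (J → Bool) → ℝ) :
    hcExp (fun x => r * f x) = r * hcExp f := by
  rw [hcExp, hcExp, ← Finset.mul_sum, mul_div_assoc]

lemma sum_walshj_mul {j : J} {F : (J → Bool) → ℝ}
    (hF : ∀ x, F (Function.update x j (!x j)) = F x) :
    (∑ x : J → Bool, walsh {j} x * F x) = 0 := by
  apply Finset.sum_ninvolution (g := fun x => Function.update x j (!x j))
  · intro x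
    rw [walsh_update_mem (Finset.mem_singleton_self j), hF]; ring
  · intro x hx h
    have := congrFun h j
    simp at this
  · intro x; exact Finset.mem_univ _
  · exact flip_involutive j

lemma walsh_insert {j : J} {S : Finset J} (hj : j ∉ S) (x : J → Bool) :
    walsh (insert j S) x = walsh {j} x * walsh S x := by
  rw [walsh_mul]
  congr 1
  rw [Disjoint.symmDiff_eq_sup (Finset.disjoint_singleton_left.mpr hj), Finset.sup_eq_union,
    ← Finset.insert_eq]

set_option maxHeartbeats 2000000 in
lemma bonami (A : Finset J) (m : ℕ) (c : Finset J → ℝ)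
    (hsupp : ∀ S, c S ≠ 0 → S ⊆ A ∧ S.card ≤ m) :
    hcExp (fun x => (∑ S : Finset J, c S * walsh S x) ^ 4)
      ≤ 9 ^ m * hcExp (fun x => (∑ S : Finset J, c S * walsh S x) ^ 2) ^ 2 := by
  classical
  induction A using Finset.induction_on generalizing m c with
  | empty =>
    have hpt : ∀ x : J → Bool, (∑ S : Finset J, c S * walsh S x) = c ∅ := by
      intro x
      rw [Finset.sum_eq_single (∅ : Finset J)]
      · rw [walsh_empty, mul_one]
      · intro S _ hS
        rcases eq_or_ne (c S) 0 with h | h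
        · rw [h, zero_mul]
        · exact absurd (Finset.subset_empty.mp (hsupp S h).1) hS
      · intro h; exact absurd (Finset.mem_univ _) h
    have e4 : hcExp (fun x => (∑ S : Finset J, c S * walsh S x) ^ 4) = c ∅ ^ 4 := by
      rw [hcExp_congr (g := fun _ => c ∅ ^ 4) (fun x => by rw [hpt x]), hcExp_const]
    have e2 : hcExp (fun x => (∑ S : Finset J, c S * walsh S x) ^ 2) = c ∅ ^ 2 := by
      rw [hcExp_congr (g := fun _ => c ∅ ^ 2) (fun x => by rw [hpt x]), hcExp_const]
    rw [e4, e2]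
    have h9 : (1:ℝ) ≤ 9 ^ m := one_le_pow₀ (by norm_num)
    nlinarith [h9, sq_nonneg (c ∅ ^ 2)]
  | @insert j A' hjA ih =>
    by_cases hm : m = 0
    · subst hm
      apply ih 0 c
      intro S hS
      refine ⟨?_, (hsupp S hS).2⟩
      have hcard := (hsupp S hS).2
      have : S = ∅ := Finset.card_eq_zero.mp (Nat.le_zero.mp hcard)
      subst this
      exact Finset.empty_subset _
    obtain ⟨m', rfl⟩ : ∃ m', m = m' + 1 := ⟨m - 1, (Nat.succ_pred_eq_of_pos (Nat.pos_of_ne_zero hm)).symm⟩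
    set c₁ : Finset J → ℝ := fun S => if j ∈ S then 0 else c S with hc₁
    set c₂ : Finset J → ℝ := fun S => if j ∈ S then 0 else c (insert j S) with hc₂
    set h₁ : (J → Bool) → ℝ := fun x => ∑ S : Finset J, c₁ S * walsh S x with hh₁
    set h₂ : (J → Bool) → ℝ := fun x => ∑ S : Finset J, c₂ S * walsh S x with hh₂
    -- pointwise decomposition
    have hdecomp : ∀ x : J → Bool,
        (∑ S : Finset J, c S * walsh S x) = h₁ x + walsh {j} x * h₂ x := by
      intro x
      rw [← Finset.sum_filter_add_sum_filter_not Finset.univ (fun S => j ∈ S)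
        (fun S => c S * walsh S x)]
      have e1 : (∑ S ∈ Finset.univ.filter (fun S => ¬ j ∈ S), c S * walsh S x)
          = h₁ x := by
        rw [hh₁, Finset.sum_filter]
        apply Finset.sum_congr rfl
        intro S _
        by_cases hS : j ∈ S <;> simp [hc₁, hS]
      have e2 : (∑ S ∈ Finset.univ.filter (fun S => j ∈ S), c S * walsh S x)
          = walsh {j} x * h₂ x := by
        have step1 : (∑ S ∈ Finset.univ.filter (fun S => j ∈ S), c S * walsh S x)
            = ∑ S ∈ Finset.univ.filter (fun S => ¬ j ∈ S),
                c (insert j S) * walsh (insert j S) x := by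
          apply Finset.sum_nbij' (i := fun S => S.erase j) (j := fun S => insert j S)
          · intro S hS
            simp only [Finset.mem_filter, Finset.mem_univ, true_and] at hS ⊢
            exact Finset.notMem_erase j S
          · intro S hS
            simp only [Finset.mem_filter, Finset.mem_univ, true_and] at hS ⊢
            exact Finset.mem_insert_self j S
          · intro S hS
            simp only [Finset.mem_filter, Finset.mem_univ, true_and] at hS
            exact Finset.insert_erase hS
          · intro S hS
            simp only [Finset.mem_filter, Finset.mem_univ, true_and] at hS
            exact Finset.erase_insert hS
          · intro S hS
            simp only [Finset.mem_filter, Finset.mem_univ, true_and] at hS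
            rw [Finset.insert_erase hS]
        rw [step1, hh₂, Finset.mul_sum, Finset.sum_filter]
        apply Finset.sum_congr rfl
        intro S _
        by_cases hS : j ∈ S
        · simp [hc₂, hS]
        · rw [if_pos hS, walsh_insert hS]
          simp only [hc₂, if_neg hS]
          ring
      rw [e1, e2]
      ring
    have hind₁ : ∀ (x : J → Bool) (b : Bool), h₁ (Function.update x j b) = h₁ x := by
      intro x b
      rw [hh₁]
      apply Finset.sum_congr rfl
      intro S _
      by_cases hS : j ∈ S
      · simp [hc₁, hS]
      · rw [walsh_update_not_mem hS]
    have hind₂ : ∀ (x : J → Bool) (b : Bool), h₂ (Function.update x j b) = h₂ x := by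
      intro x b
      rw [hh₂]
      apply Finset.sum_congr rfl
      intro S _
      by_cases hS : j ∈ S
      · simp [hc₂, hS]
      · rw [walsh_update_not_mem hS]
    have hχsq : ∀ x : J → Bool, walsh {j} x ^ 2 = 1 := fun x => by
      rw [pow_two]; exact walsh_sq _ _
    have hEzero : ∀ Q : (J → Bool) → ℝ, (∀ x, Q (Function.update x j (!x j)) = Q x) →
        hcExp (fun x => walsh {j} x * Q x) = 0 := by
      intro Q hQ
      rw [hcExp, sum_walshj_mul hQ, zero_div]
    have hE4 : hcExp (fun x => (∑ S : Finset J, c S * walsh S x) ^ 4)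
        = hcExp (fun x => h₁ x ^ 4) + 6 * hcExp (fun x => h₁ x ^ 2 * h₂ x ^ 2)
          + hcExp (fun x => h₂ x ^ 4) := by
      have hpt : ∀ x : J → Bool, (∑ S : Finset J, c S * walsh S x) ^ 4
          = (h₁ x ^ 4 + 6 * (h₁ x ^ 2 * h₂ x ^ 2) + h₂ x ^ 4)
            + walsh {j} x * (4 * h₁ x ^ 3 * h₂ x + 4 * h₁ x * h₂ x ^ 3) := by
        intro x
        rw [hdecomp x]
        have hc2 := hχsq x
        linear_combination (6 * h₁ x ^ 2 * h₂ x ^ 2 + 4 * h₁ x * h₂ x ^ 3 * walsh {j} x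
          + h₂ x ^ 4 * (walsh {j} x ^ 2 + 1)) * hc2
      rw [hcExp_congr hpt,
        hcExp_add (fun x => h₁ x ^ 4 + 6 * (h₁ x ^ 2 * h₂ x ^ 2) + h₂ x ^ 4)
          (fun x => walsh {j} x * (4 * h₁ x ^ 3 * h₂ x + 4 * h₁ x * h₂ x ^ 3)),
        hEzero _ (fun x => by simp only [hind₁, hind₂]), add_zero,
        hcExp_add (fun x => h₁ x ^ 4 + 6 * (h₁ x ^ 2 * h₂ x ^ 2)) (fun x => h₂ x ^ 4),
        hcExp_add (fun x => h₁ x ^ 4) (fun x => 6 * (h₁ x ^ 2 * h₂ x ^ 2)),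
        hcExp_cmul 6 (fun x => h₁ x ^ 2 * h₂ x ^ 2)]
    have hE2 : hcExp (fun x => (∑ S : Finset J, c S * walsh S x) ^ 2)
        = hcExp (fun x => h₁ x ^ 2) + hcExp (fun x => h₂ x ^ 2) := by
      have hpt : ∀ x : J → Bool, (∑ S : Finset J, c S * walsh S x) ^ 2
          = (h₁ x ^ 2 + h₂ x ^ 2) + walsh {j} x * (2 * (h₁ x * h₂ x)) := by
        intro x
        rw [hdecomp x]
        have hc2 := hχsq x
        linear_combination (h₂ x ^ 2) * hc2
      rw [hcExp_congr hpt,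
        hcExp_add (fun x => h₁ x ^ 2 + h₂ x ^ 2)
          (fun x => walsh {j} x * (2 * (h₁ x * h₂ x))),
        hEzero _ (fun x => by simp only [hind₁, hind₂]), add_zero,
        hcExp_add (fun x => h₁ x ^ 2) (fun x => h₂ x ^ 2)]
    have hs₁ : ∀ S, c₁ S ≠ 0 → S ⊆ A' ∧ S.card ≤ m' + 1 := by
      intro S hS
      by_cases hj : j ∈ S
      · simp [hc₁, hj] at hS
      · rw [hc₁] at hS
        simp only [if_neg hj] at hS
        obtain ⟨hsub, hcard⟩ := hsupp S hS
        refine ⟨?_, hcard⟩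
        intro i hi
        rcases Finset.mem_insert.mp (hsub hi) with rfl | h
        · exact absurd hi hj
        · exact h
    have hs₂ : ∀ S, c₂ S ≠ 0 → S ⊆ A' ∧ S.card ≤ m' := by
      intro S hS
      by_cases hj : j ∈ S
      · simp [hc₂, hj] at hS
      · rw [hc₂] at hS
        simp only [if_neg hj] at hS
        obtain ⟨hsub, hcard⟩ := hsupp _ hS
        have hsub' : S ⊆ A' := by
          intro i hi
          rcases Finset.mem_insert.mp (hsub (Finset.mem_insert_of_mem hi)) with rfl | h
          · exact absurd hi hj
          · exact h
        have hcard' : S.card + 1 ≤ m' + 1 := by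
          rw [← Finset.card_insert_of_notMem hj]
          exact hcard
        exact ⟨hsub', Nat.succ_le_succ_iff.mp hcard'⟩
    have ih₁ : hcExp (fun x => h₁ x ^ 4) ≤ 9 ^ (m' + 1) * hcExp (fun x => h₁ x ^ 2) ^ 2 :=
      ih (m' + 1) c₁ hs₁
    have ih₂ : hcExp (fun x => h₂ x ^ 4) ≤ 9 ^ m' * hcExp (fun x => h₂ x ^ 2) ^ 2 :=
      ih m' c₂ hs₂
    set a := hcExp (fun x => h₁ x ^ 2) with hadef
    set b := hcExp (fun x => h₂ x ^ 2) with hbdef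
    set P := hcExp (fun x => h₁ x ^ 4) with hPdef
    set Q := hcExp (fun x => h₂ x ^ 4) with hQdef
    set R := hcExp (fun x => h₁ x ^ 2 * h₂ x ^ 2) with hRdef
    have ha : 0 ≤ a := hcExp_nonneg fun x => sq_nonneg _
    have hb : 0 ≤ b := hcExp_nonneg fun x => sq_nonneg _
    have hP0 : 0 ≤ P := hcExp_nonneg fun x => by positivity
    have hQ0 : 0 ≤ Q := hcExp_nonneg fun x => by positivity
    have hR0 : 0 ≤ R := hcExp_nonneg fun x => by positivity
    have hCS : R ^ 2 ≤ P * Q := by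
      have hcs := hcExp_cauchy (fun x => h₁ x ^ 2) (fun x => h₂ x ^ 2)
      have e1 : hcExp (fun x => (h₁ x ^ 2) ^ 2) = P := hcExp_congr fun x => by ring
      have e2 : hcExp (fun x => (h₂ x ^ 2) ^ 2) = Q := hcExp_congr fun x => by ring
      rw [e1, e2] at hcs
      exact hcs
    set s : ℝ := 3 ^ m' with hsdef
    have hs0 : 0 < s := by positivity
    have h9s : (9:ℝ) ^ m' = s ^ 2 := by
      rw [hsdef, ← pow_mul, mul_comm, pow_mul]
      norm_num
    have h9s1 : (9:ℝ) ^ (m' + 1) = 9 * s ^ 2 := by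
      rw [pow_succ, h9s]; ring
    have hR2 : R ^ 2 ≤ (3 * s ^ 2 * a * b) ^ 2 := by
      calc R ^ 2 ≤ P * Q := hCS
        _ ≤ (9 ^ (m' + 1) * a ^ 2) * (9 ^ m' * b ^ 2) := by
            apply mul_le_mul ih₁ ih₂ hQ0 (by positivity)
        _ = (3 * s ^ 2 * a * b) ^ 2 := by rw [h9s, h9s1]; ring
    have hK0 : 0 ≤ 3 * s ^ 2 * a * b := by positivity
    have hRle : R ≤ 3 * s ^ 2 * a * b := by nlinarith [hR2, hR0, hK0]
    rw [hE4, hE2, h9s1]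
    nlinarith [ih₁, ih₂, hRle, ha, hb, hs0, h9s1, h9s, sq_nonneg (s * b), sq_nonneg s]

lemma hcExp_mul_expand (g : (J → Bool) → ℝ) (c : Finset J → ℝ) :
    hcExp (fun x => g x * (∑ S : Finset J, c S * walsh S x))
      = ∑ S : Finset J, c S * fcoef g S := by
  rw [hcExp, sum_mul_expand]
  field_simp

lemma lqNorm_two_eq (g : (J → Bool) → ℝ) :
    lqNorm 2 g = Real.sqrt (hcExp (fun x => g x ^ 2)) := by
  rw [lqNorm]
  have h1 : (hcExp fun x => |g x| ^ (2:ℝ)) = hcExp (fun x => g x ^ 2) :=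
    hcExp_congr fun x => by
      rw [show (2:ℝ) = ((2:ℕ):ℝ) by norm_num, Real.rpow_natCast, sq_abs]
  rw [h1, ← Real.sqrt_eq_rpow]

lemma lqNorm_two_sq (g : (J → Bool) → ℝ) :
    lqNorm 2 g ^ 2 = hcExp (fun x => g x ^ 2) := by
  rw [lqNorm_two_eq, Real.sq_sqrt (hcExp_nonneg fun x => sq_nonneg _)]

lemma lqNorm_one_eq (g : (J → Bool) → ℝ) :
    lqNorm 1 g = hcExp (fun x => |g x|) := by
  rw [lqNorm]
  have h1 : (hcExp fun x => |g x| ^ (1:ℝ)) = hcExp (fun x => |g x|) :=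
    hcExp_congr fun x => by rw [Real.rpow_one]
  rw [h1]
  norm_num

lemma hcExp_abs_pos {g : (J → Bool) → ℝ} (hg : g ≠ 0) :
    0 < hcExp (fun x => |g x|) := by
  obtain ⟨x₀, hx₀⟩ : ∃ x, g x ≠ 0 := by
    by_contra h; push_neg at h; exact hg (funext h)
  rw [hcExp]
  apply div_pos ?_ (by positivity)
  exact Finset.sum_pos' (fun x _ => abs_nonneg _) ⟨x₀, Finset.mem_univ _, abs_pos.mpr hx₀⟩

lemma hcExp_abs_sq_le (g : (J → Bool) → ℝ) :
    hcExp (fun x => |g x|) ^ 2 ≤ hcExp (fun x => g x ^ 2) := by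
  have h := hcExp_cauchy (fun x => |g x|) (fun _ => (1:ℝ))
  have e1 : hcExp (fun x => |g x| * 1) = hcExp (fun x => |g x|) :=
    hcExp_congr fun x => by ring
  have e2 : hcExp (fun x : J → Bool => |g x| ^ 2) = hcExp (fun x => g x ^ 2) :=
    hcExp_congr fun x => by rw [sq_abs]
  have e3 : hcExp (fun _ : J → Bool => (1:ℝ) ^ 2) = 1 := by
    rw [hcExp_congr (g := fun _ => (1:ℝ)) (fun x => by norm_num), hcExp_const]
  rw [e1, e2, e3, mul_one] at h
  exact h

lemma bm_le_V (g : (J → Bool) → ℝ) (m : ℕ) :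
    (∑ S ∈ Finset.univ.filter (fun S : Finset J => S ≠ ∅ ∧ S.card ≤ m), fcoef g S ^ 2)
      ≤ hcExp (fun x => g x ^ 2) := by
  rw [hcExp_sq]
  exact Finset.sum_le_sum_of_subset_of_nonneg (Finset.filter_subset _ _)
    (fun S _ _ => sq_nonneg _)

set_option maxHeartbeats 2000000 in
lemma bm_le (g : (J → Bool) → ℝ) (m : ℕ) :
    (∑ S ∈ Finset.univ.filter (fun S : Finset J => S ≠ ∅ ∧ S.card ≤ m), fcoef g S ^ 2)
      ≤ 3 ^ m * (hcExp (fun x => |g x|) * Real.sqrt (hcExp (fun x => g x ^ 2))) := by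
  classical
  set c : Finset J → ℝ := fun S => if S ≠ ∅ ∧ S.card ≤ m then fcoef g S else 0 with hc
  set h : (J → Bool) → ℝ := fun x => ∑ S : Finset J, c S * walsh S x with hh
  set b := ∑ S ∈ Finset.univ.filter (fun S : Finset J => S ≠ ∅ ∧ S.card ≤ m),
    fcoef g S ^ 2 with hb
  have hb0 : 0 ≤ b := Finset.sum_nonneg fun S _ => sq_nonneg _
  have hsum_ite : ∀ u : Finset J → ℝ,
      (∑ S : Finset J, (if S ≠ ∅ ∧ S.card ≤ m then u S else 0))
        = ∑ S ∈ Finset.univ.filter (fun S : Finset J => S ≠ ∅ ∧ S.card ≤ m), u S := by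
    intro u
    rw [Finset.sum_filter]
  have hEh2 : hcExp (fun x => h x ^ 2) = b := by
    have h1 : hcExp (fun x => h x ^ 2) = ∑ S : Finset J, fcoef h S ^ 2 := hcExp_sq h
    have h2 : ∀ S, fcoef h S = c S := fun S => fcoef_expand c S
    rw [h1]
    have h3 : ∀ S : Finset J, fcoef h S ^ 2
        = (if S ≠ ∅ ∧ S.card ≤ m then fcoef g S ^ 2 else 0) := by
      intro S
      rw [h2 S, hc]
      by_cases hS : S ≠ ∅ ∧ S.card ≤ m <;> simp [hS]
    rw [Finset.sum_congr rfl (fun S _ => h3 S), hsum_ite]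
  have hgh : hcExp (fun x => g x * h x) = b := by
    have h1 : hcExp (fun x => g x * h x) = ∑ S : Finset J, c S * fcoef g S :=
      hcExp_mul_expand g c
    rw [h1]
    have h3 : ∀ S : Finset J, c S * fcoef g S
        = (if S ≠ ∅ ∧ S.card ≤ m then fcoef g S ^ 2 else 0) := by
      intro S
      rw [hc]
      by_cases hS : S ≠ ∅ ∧ S.card ≤ m <;> simp [hS] <;> ring
    rw [Finset.sum_congr rfl (fun S _ => h3 S), hsum_ite]
  have hW : b ≤ hcExp (fun x => |g x| * |h x|) := by
    rw [← hgh]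
    apply hcExp_mono
    intro x
    calc g x * h x ≤ |g x * h x| := le_abs_self _
      _ = |g x| * |h x| := abs_mul _ _
  have hCS1 : hcExp (fun x => |g x| * |h x|) ^ 2
      ≤ hcExp (fun x => |g x|) * hcExp (fun x => |g x| * h x ^ 2) := by
    have hcs := hcExp_cauchy (fun x => Real.sqrt |g x|) (fun x => Real.sqrt |g x| * |h x|)
    have e1 : hcExp (fun x => Real.sqrt |g x| * (Real.sqrt |g x| * |h x|))
        = hcExp (fun x => |g x| * |h x|) :=
      hcExp_congr fun x => by
        rw [← mul_assoc, Real.mul_self_sqrt (abs_nonneg _)]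
    have e2 : hcExp (fun x => Real.sqrt |g x| ^ 2) = hcExp (fun x => |g x|) :=
      hcExp_congr fun x => Real.sq_sqrt (abs_nonneg _)
    have e3 : hcExp (fun x => (Real.sqrt |g x| * |h x|) ^ 2)
        = hcExp (fun x => |g x| * h x ^ 2) :=
      hcExp_congr fun x => by
        rw [mul_pow, Real.sq_sqrt (abs_nonneg _), sq_abs]
    rw [e1, e2, e3] at hcs
    exact hcs
  have hCS2 : hcExp (fun x => |g x| * h x ^ 2) ^ 2
      ≤ hcExp (fun x => g x ^ 2) * hcExp (fun x => h x ^ 4) := by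
    have hcs := hcExp_cauchy (fun x => |g x|) (fun x => h x ^ 2)
    have e1 : hcExp (fun x : J → Bool => |g x| ^ 2) = hcExp (fun x => g x ^ 2) :=
      hcExp_congr fun x => by rw [sq_abs]
    have e2 : hcExp (fun x => (h x ^ 2) ^ 2) = hcExp (fun x => h x ^ 4) :=
      hcExp_congr fun x => by ring
    rw [e1, e2] at hcs
    exact hcs
  have hB : hcExp (fun x => h x ^ 4) ≤ 9 ^ m * b ^ 2 := by
    have hsupp : ∀ S, c S ≠ 0 → S ⊆ Finset.univ ∧ S.card ≤ m := by
      intro S hS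
      refine ⟨Finset.subset_univ S, ?_⟩
      rw [hc] at hS
      by_cases hP : S ≠ ∅ ∧ S.card ≤ m
      · exact hP.2
      · simp [hP] at hS
    have hbon : hcExp (fun x => h x ^ 4) ≤ 9 ^ m * hcExp (fun x => h x ^ 2) ^ 2 :=
      bonami Finset.univ m c hsupp
    rw [hEh2] at hbon
    exact hbon
  -- combine
  set N1 := hcExp (fun x : J → Bool => |g x|) with hN1
  set V := hcExp (fun x : J → Bool => g x ^ 2) with hV
  set W := hcExp (fun x : J → Bool => |g x| * |h x|) with hWd
  set X := hcExp (fun x : J → Bool => |g x| * h x ^ 2) with hXd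
  set Y := hcExp (fun x : J → Bool => h x ^ 4) with hYd
  have hW0 : 0 ≤ W := hcExp_nonneg fun x => mul_nonneg (abs_nonneg _) (abs_nonneg _)
  have hX0 : 0 ≤ X := hcExp_nonneg fun x => mul_nonneg (abs_nonneg _) (sq_nonneg _)
  have hY0 : 0 ≤ Y := hcExp_nonneg fun x => by positivity
  have hN10 : 0 ≤ N1 := hcExp_nonneg fun x => abs_nonneg _
  have hV0 : 0 ≤ V := hcExp_nonneg fun x => sq_nonneg _
  set K := (3:ℝ) ^ m * (N1 * Real.sqrt V) with hK
  have hK0 : 0 ≤ K := by positivity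
  have hK2 : K ^ 2 = 9 ^ m * N1 ^ 2 * V := by
    rw [hK, mul_pow, mul_pow, Real.sq_sqrt hV0, ← pow_mul, mul_comm m 2, pow_mul]
    norm_num
    ring
  have hb4 : b ^ 2 * b ^ 2 ≤ K ^ 2 * b ^ 2 := by
    have s1 : b ^ 2 ≤ W ^ 2 := by nlinarith [hW, hb0]
    have s2 : W ^ 2 ≤ N1 * X := hCS1
    have s3 : b ^ 2 * b ^ 2 ≤ (N1 * X) * (N1 * X) := by nlinarith [s1, s2, hb0, hW0, hX0, hN10]
    have s4 : X ^ 2 ≤ V * Y := hCS2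
    have s5 : Y ≤ 9 ^ m * b ^ 2 := hB
    calc b ^ 2 * b ^ 2 ≤ (N1 * X) * (N1 * X) := s3
      _ = N1 ^ 2 * X ^ 2 := by ring
      _ ≤ N1 ^ 2 * (V * Y) := by nlinarith [mul_nonneg (sq_nonneg N1) (sub_nonneg.mpr s4)]
      _ ≤ N1 ^ 2 * (V * (9 ^ m * b ^ 2)) := by
          nlinarith [mul_nonneg (mul_nonneg (sq_nonneg N1) hV0) (sub_nonneg.mpr s5)]
      _ = K ^ 2 * b ^ 2 := by rw [hK2]; ring
  have hbK : b ≤ K := by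
    rcases eq_or_lt_of_le hb0 with hbz | hbp
    · rw [← hbz]; exact hK0
    · have hb2 : (0:ℝ) < b ^ 2 := by positivity
      have : b ^ 2 ≤ K ^ 2 := le_of_mul_le_mul_right (by linarith [hb4]) hb2
      calc b = Real.sqrt (b ^ 2) := (Real.sqrt_sq hb0).symm
        _ ≤ Real.sqrt (K ^ 2) := Real.sqrt_le_sqrt this
        _ = K := Real.sqrt_sq hK0
  exact hbK

lemma half_geom (N : ℕ) : (∑ i ∈ Finset.range N, ((1:ℝ)/2) ^ i) ≤ 2 := by
  have h := geom_sum_eq (by norm_num : ((1:ℝ)/2) ≠ 1) N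
  have hp : (0:ℝ) ≤ (1/2) ^ N := by positivity
  have key : (((1:ℝ)/2) ^ N - 1) / ((1:ℝ)/2 - 1) = 2 - 2 * (1/2) ^ N := by
    field_simp
    ring
  rw [h, key]
  linarith

lemma half_geom_Ico (a N : ℕ) :
    (∑ i ∈ Finset.Ico a N, ((1:ℝ)/2) ^ i) ≤ 2 * (1/2) ^ a := by
  rw [Finset.sum_Ico_eq_sum_range]
  have h1 : ∀ k, ((1:ℝ)/2) ^ (a + k) = (1/2) ^ a * (1/2) ^ k := fun k => pow_add _ _ _
  rw [Finset.sum_congr rfl (fun k _ => h1 k), ← Finset.mul_sum]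
  calc ((1:ℝ)/2) ^ a * ∑ k ∈ Finset.range (N - a), ((1:ℝ)/2) ^ k
      ≤ (1/2) ^ a * 2 := by
        apply mul_le_mul_of_nonneg_left (half_geom _) (by positivity)
    _ = 2 * (1/2) ^ a := mul_comm _ _

lemma scalar_sum (L : ℝ) (hL : 0 ≤ L) (N : ℕ) :
    (∑ i ∈ Finset.range N,
        ((1:ℝ)/2) ^ i * min 1 (Real.exp ((2:ℝ) ^ (i+1) * Real.log 3 - L)))
      ≤ 36 / (1 + L) := by
  classical
  set c := Real.log 3 with hc
  have hc1 : 1 ≤ c := by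
    rw [hc, Real.le_log_iff_exp_le (by norm_num)]
    calc Real.exp 1 ≤ 2.7182818286 := le_of_lt Real.exp_one_lt_d9
      _ ≤ 3 := by norm_num
  have hc2 : c ≤ 2 := by
    calc c ≤ 3 - 1 := Real.log_le_sub_one_of_pos (by norm_num)
      _ = 2 := by norm_num
  have h1L : (0:ℝ) < 1 + L := by linarith
  rw [← Finset.sum_filter_add_sum_filter_not (Finset.range N)
    (fun i => L ≤ 2 ^ (i+2) * c)]
  have partA : (∑ i ∈ (Finset.range N).filter (fun i => L ≤ 2 ^ (i+2) * c),
      ((1:ℝ)/2) ^ i * min 1 (Real.exp ((2:ℝ) ^ (i+1) * c - L))) ≤ 32 / (1 + L) := by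
    set F := (Finset.range N).filter (fun i => L ≤ 2 ^ (i+2) * c) with hF
    have step1 : (∑ i ∈ F, ((1:ℝ)/2) ^ i * min 1 (Real.exp ((2:ℝ) ^ (i+1) * c - L)))
        ≤ ∑ i ∈ F, ((1:ℝ)/2) ^ i := by
      apply Finset.sum_le_sum
      intro i _
      have h1 : min 1 (Real.exp ((2:ℝ) ^ (i+1) * c - L)) ≤ 1 := min_le_left _ _
      have h2 : (0:ℝ) ≤ ((1:ℝ)/2) ^ i := by positivity
      nlinarith
    rcases Finset.eq_empty_or_nonempty F with hFe | hFne
    · rw [hFe] at step1 ⊢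
      simp only [Finset.sum_empty] at step1 ⊢
      positivity
    · set i₀ := F.min' hFne with hi₀
      have hi₀F : i₀ ∈ F := F.min'_mem hFne
      have hi₀P : L ≤ 2 ^ (i₀+2) * c := (Finset.mem_filter.mp hi₀F).2
      have hsub : F ⊆ Finset.Ico i₀ N := by
        intro i hi
        exact Finset.mem_Ico.mpr ⟨F.min'_le i hi, Finset.mem_range.mp (Finset.mem_filter.mp hi).1⟩
      have step2 : (∑ i ∈ F, ((1:ℝ)/2) ^ i) ≤ ∑ i ∈ Finset.Ico i₀ N, ((1:ℝ)/2) ^ i :=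
        Finset.sum_le_sum_of_subset_of_nonneg hsub (fun i _ _ => by positivity)
      have step3 := half_geom_Ico i₀ N
      have hpow : (1:ℝ) + L ≤ 2 ^ (i₀+4) := by
        have hpp : (1:ℝ) ≤ 2 ^ (i₀+2) := one_le_pow₀ (by norm_num)
        have h2c : (1:ℝ) ≤ 2 ^ (i₀+2) * c := by nlinarith
        have hstep : (1:ℝ) + L ≤ 2 * (2 ^ (i₀+2) * c) := by linarith
        have hcc : (2:ℝ) * (2 ^ (i₀+2) * c) ≤ 2 ^ (i₀+2) * 4 := by nlinarith
        have hee : (2:ℝ) ^ (i₀+2) * 4 = 2 ^ (i₀+4) := by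
          rw [show i₀+4 = (i₀+2)+2 by omega, pow_add, pow_add, pow_add]
          ring
        linarith
      have final : 2 * ((1:ℝ)/2) ^ i₀ ≤ 32 / (1 + L) := by
        have e : 2 * ((1:ℝ)/2) ^ i₀ = 32 / 2 ^ (i₀+4) := by
          rw [show i₀+4 = i₀+4 from rfl, pow_add, one_div, inv_pow]
          field_simp
          ring
        rw [e]
        gcongr
      linarith
  have partB : (∑ i ∈ (Finset.range N).filter (fun i => ¬ L ≤ 2 ^ (i+2) * c),
      ((1:ℝ)/2) ^ i * min 1 (Real.exp ((2:ℝ) ^ (i+1) * c - L))) ≤ 4 / (1 + L) := by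
    have hexp : Real.exp (-(L/2)) ≤ 2 / (1 + L) := by
      have h1 : 1 + L/2 ≤ Real.exp (L/2) := by
        have := Real.add_one_le_exp (L/2)
        linarith
      have h2 : (0:ℝ) < Real.exp (L/2) := Real.exp_pos _
      rw [Real.exp_neg]
      rw [inv_le_iff_one_le_mul₀ h2, div_mul_eq_mul_div, le_div_iff₀ h1L]
      nlinarith
    have step1 : (∑ i ∈ (Finset.range N).filter (fun i => ¬ L ≤ 2 ^ (i+2) * c),
        ((1:ℝ)/2) ^ i * min 1 (Real.exp ((2:ℝ) ^ (i+1) * c - L)))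
        ≤ ∑ i ∈ (Finset.range N).filter (fun i => ¬ L ≤ 2 ^ (i+2) * c),
            ((1:ℝ)/2) ^ i * (2 / (1 + L)) := by
      apply Finset.sum_le_sum
      intro i hi
      have hiP : ¬ L ≤ 2 ^ (i+2) * c := (Finset.mem_filter.mp hi).2
      push_neg at hiP
      have hhalf : (2:ℝ) ^ (i+1) * c ≤ L / 2 := by
        have he : (2:ℝ) ^ (i+2) = 2 * 2 ^ (i+1) := by rw [pow_succ]; ring
        rw [he] at hiP
        nlinarith
      have hmin : min 1 (Real.exp ((2:ℝ) ^ (i+1) * c - L)) ≤ 2 / (1 + L) := by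
        calc min 1 (Real.exp ((2:ℝ) ^ (i+1) * c - L))
            ≤ Real.exp ((2:ℝ) ^ (i+1) * c - L) := min_le_right _ _
          _ ≤ Real.exp (-(L/2)) := by
              apply Real.exp_le_exp.mpr
              linarith
          _ ≤ 2 / (1 + L) := hexp
      have h2 : (0:ℝ) ≤ ((1:ℝ)/2) ^ i := by positivity
      have hge : (0:ℝ) ≤ min 1 (Real.exp ((2:ℝ) ^ (i+1) * c - L)) :=
        le_min (by norm_num) (Real.exp_nonneg _)
      nlinarith
    have step2 : (∑ i ∈ (Finset.range N).filter (fun i => ¬ L ≤ 2 ^ (i+2) * c),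
        ((1:ℝ)/2) ^ i * (2 / (1 + L)))
        ≤ 2 * (2 / (1 + L)) := by
      rw [← Finset.sum_mul]
      have hs : (∑ i ∈ (Finset.range N).filter (fun i => ¬ L ≤ 2 ^ (i+2) * c),
          ((1:ℝ)/2) ^ i) ≤ 2 := by
        calc (∑ i ∈ (Finset.range N).filter (fun i => ¬ L ≤ 2 ^ (i+2) * c), ((1:ℝ)/2) ^ i)
            ≤ ∑ i ∈ Finset.range N, ((1:ℝ)/2) ^ i :=
              Finset.sum_le_sum_of_subset_of_nonneg (Finset.filter_subset _ _)
                (fun i _ _ => by positivity)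
          _ ≤ 2 := half_geom N
      have hpos : (0:ℝ) ≤ 2 / (1 + L) := by positivity
      nlinarith
    calc _ ≤ 2 * (2 / (1 + L)) := le_trans step1 step2
      _ = 4 / (1 + L) := by ring
  calc _ ≤ 32 / (1+L) + 4 / (1+L) := add_le_add partA partB
    _ = 36 / (1 + L) := by ring

set_option maxHeartbeats 2000000 in
lemma key_lemma (g : (J → Bool) → ℝ) (hg : g ≠ 0) :
    (∑ S ∈ Finset.univ.erase (∅ : Finset J), fcoef g S ^ 2 / S.card)
      ≤ 36 * (lqNorm 2 g ^ 2 / (1 + Real.log (lqNorm 2 g / lqNorm 1 g))) := by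
  classical
  rw [lqNorm_two_sq, lqNorm_two_eq, lqNorm_one_eq]
  set n := Fintype.card J with hn
  set N1 := hcExp (fun x : J → Bool => |g x|) with hN1d
  set V := hcExp (fun x : J → Bool => g x ^ 2) with hVd
  have hN1 : 0 < N1 := hcExp_abs_pos hg
  have hN1V : N1 ^ 2 ≤ V := hcExp_abs_sq_le g
  have hV : 0 < V := lt_of_lt_of_le (by positivity) hN1V
  have hsV : Real.sqrt V * Real.sqrt V = V := Real.mul_self_sqrt hV.le
  have hsVpos : 0 < Real.sqrt V := Real.sqrt_pos.mpr hV
  set L := Real.log (Real.sqrt V / N1) with hLd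
  have hratio1 : 1 ≤ Real.sqrt V / N1 := by
    rw [le_div_iff₀ hN1, one_mul]
    calc N1 = Real.sqrt (N1 ^ 2) := (Real.sqrt_sq hN1.le).symm
      _ ≤ Real.sqrt V := Real.sqrt_le_sqrt hN1V
  have hL : 0 ≤ L := Real.log_nonneg hratio1
  have h1L : (0:ℝ) < 1 + L := by linarith
  have hexpL : N1 * Real.sqrt V = V * Real.exp (-L) := by
    rw [hLd, Real.exp_neg, Real.exp_log (by positivity), inv_div]
    field_simp
    linear_combination hsV
  -- b m bounds
  have hbmin : ∀ m : ℕ,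
      (∑ S ∈ Finset.univ.filter (fun S : Finset J => S ≠ ∅ ∧ S.card ≤ m), fcoef g S ^ 2)
        ≤ V * min 1 (Real.exp ((m:ℝ) * Real.log 3 - L)) := by
    intro m
    rcases le_total (1:ℝ) (Real.exp ((m:ℝ) * Real.log 3 - L)) with hm | hm
    · rw [min_eq_left hm, mul_one]
      exact bm_le_V g m
    · rw [min_eq_right hm]
      have h1 := bm_le g m
      have e : (3:ℝ) ^ m * (N1 * Real.sqrt V) = V * Real.exp ((m:ℝ) * Real.log 3 - L) := by
        rw [hexpL, sub_eq_add_neg, Real.exp_add, Real.exp_nat_mul,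
          Real.exp_log (by norm_num : (0:ℝ) < 3)]
        ring
      rw [e] at h1
      exact h1
  -- per-S bound and fiberwise decomposition
  set ℓ : Finset J → ℕ := fun S => Nat.log 2 S.card with hℓ
  have hstep1 : (∑ S ∈ Finset.univ.erase (∅ : Finset J), fcoef g S ^ 2 / S.card)
      ≤ ∑ S ∈ Finset.univ.erase (∅ : Finset J), ((1:ℝ)/2) ^ (ℓ S) * fcoef g S ^ 2 := by
    apply Finset.sum_le_sum
    intro S hS
    have hSne : S ≠ ∅ := (Finset.mem_erase.mp hS).1
    have hcard : S.card ≠ 0 := fun h => hSne (Finset.card_eq_zero.mp h)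
    have hpow : (2:ℕ) ^ (ℓ S) ≤ S.card := Nat.pow_log_le_self 2 hcard
    have hpowR : (2:ℝ) ^ (ℓ S) ≤ (S.card : ℝ) := by
      calc (2:ℝ) ^ (ℓ S) = ((2 ^ (ℓ S) : ℕ) : ℝ) := by push_cast; ring
        _ ≤ (S.card : ℝ) := Nat.cast_le.mpr hpow
    have hp2 : (0:ℝ) < 2 ^ (ℓ S) := by positivity
    calc fcoef g S ^ 2 / S.card ≤ fcoef g S ^ 2 / 2 ^ (ℓ S) :=
          div_le_div_of_nonneg_left (sq_nonneg _) hp2 hpowR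
      _ = ((1:ℝ)/2) ^ (ℓ S) * fcoef g S ^ 2 := by
          rw [one_div, inv_pow, div_eq_mul_inv, mul_comm]
  have hmaps : ∀ S ∈ Finset.univ.erase (∅ : Finset J), ℓ S ∈ Finset.range (n+1) := by
    intro S _
    apply Finset.mem_range.mpr
    have h1 : ℓ S ≤ S.card := Nat.log_le_self 2 _
    have h2 : S.card ≤ n := by
      rw [hn, ← Finset.card_univ]
      exact Finset.card_le_univ S
    omega
  have hfiber := Finset.sum_fiberwise_of_maps_to hmaps
    (fun S => ((1:ℝ)/2) ^ (ℓ S) * fcoef g S ^ 2)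
  have hstep2 : (∑ S ∈ Finset.univ.erase (∅ : Finset J), ((1:ℝ)/2) ^ (ℓ S) * fcoef g S ^ 2)
      = ∑ i ∈ Finset.range (n+1), ∑ S ∈ (Finset.univ.erase (∅ : Finset J)).filter
          (fun S => ℓ S = i), ((1:ℝ)/2) ^ (ℓ S) * fcoef g S ^ 2 := hfiber.symm
  have hstep3 : ∀ i ∈ Finset.range (n+1),
      (∑ S ∈ (Finset.univ.erase (∅ : Finset J)).filter (fun S => ℓ S = i),
        ((1:ℝ)/2) ^ (ℓ S) * fcoef g S ^ 2)
      ≤ ((1:ℝ)/2) ^ i * (V * min 1 (Real.exp ((2:ℝ) ^ (i+1) * Real.log 3 - L))) := by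
    intro i _
    have e1 : (∑ S ∈ (Finset.univ.erase (∅ : Finset J)).filter (fun S => ℓ S = i),
        ((1:ℝ)/2) ^ (ℓ S) * fcoef g S ^ 2)
        = ((1:ℝ)/2) ^ i * ∑ S ∈ (Finset.univ.erase (∅ : Finset J)).filter
            (fun S => ℓ S = i), fcoef g S ^ 2 := by
      rw [Finset.mul_sum]
      apply Finset.sum_congr rfl
      intro S hS
      rw [(Finset.mem_filter.mp hS).2]
    rw [e1]
    have hsubs : (Finset.univ.erase (∅ : Finset J)).filter (fun S => ℓ S = i)
        ⊆ Finset.univ.filter (fun S : Finset J => S ≠ ∅ ∧ S.card ≤ 2 ^ (i+1)) := by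
      intro S hS
      obtain ⟨hS1, hS2⟩ := Finset.mem_filter.mp hS
      have hSne : S ≠ ∅ := (Finset.mem_erase.mp hS1).1
      have hcard : S.card ≠ 0 := fun h => hSne (Finset.card_eq_zero.mp h)
      apply Finset.mem_filter.mpr
      refine ⟨Finset.mem_univ _, hSne, ?_⟩
      have hid : Nat.log 2 S.card = i := hS2
      have h := Nat.lt_pow_succ_log_self (by norm_num : 1 < 2) S.card
      rw [hid] at h
      exact Nat.le_of_lt h
    have hss : (∑ S ∈ (Finset.univ.erase (∅ : Finset J)).filter (fun S => ℓ S = i),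
        fcoef g S ^ 2)
        ≤ ∑ S ∈ Finset.univ.filter (fun S : Finset J => S ≠ ∅ ∧ S.card ≤ 2 ^ (i+1)),
            fcoef g S ^ 2 :=
      Finset.sum_le_sum_of_subset_of_nonneg hsubs (fun S _ _ => sq_nonneg _)
    have hbm := hbmin (2 ^ (i+1))
    have hcast : ((2 ^ (i+1) : ℕ) : ℝ) = (2:ℝ) ^ (i+1) := by push_cast; ring
    rw [hcast] at hbm
    have hmono : (∑ S ∈ (Finset.univ.erase (∅ : Finset J)).filter (fun S => ℓ S = i),
        fcoef g S ^ 2) ≤ V * min 1 (Real.exp ((2:ℝ) ^ (i+1) * Real.log 3 - L)) :=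
      le_trans hss hbm
    have hp : (0:ℝ) ≤ ((1:ℝ)/2) ^ i := by positivity
    exact mul_le_mul_of_nonneg_left hmono hp
  have hstep4 : (∑ i ∈ Finset.range (n+1),
      ((1:ℝ)/2) ^ i * (V * min 1 (Real.exp ((2:ℝ) ^ (i+1) * Real.log 3 - L))))
      = V * ∑ i ∈ Finset.range (n+1),
          ((1:ℝ)/2) ^ i * min 1 (Real.exp ((2:ℝ) ^ (i+1) * Real.log 3 - L)) := by
    rw [Finset.mul_sum]
    apply Finset.sum_congr rfl
    intros
    ring
  have hscal := scalar_sum L hL (n+1)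
  calc (∑ S ∈ Finset.univ.erase (∅ : Finset J), fcoef g S ^ 2 / S.card)
      ≤ ∑ S ∈ Finset.univ.erase (∅ : Finset J), ((1:ℝ)/2) ^ (ℓ S) * fcoef g S ^ 2 := hstep1
    _ = ∑ i ∈ Finset.range (n+1), ∑ S ∈ (Finset.univ.erase (∅ : Finset J)).filter
          (fun S => ℓ S = i), ((1:ℝ)/2) ^ (ℓ S) * fcoef g S ^ 2 := hstep2
    _ ≤ ∑ i ∈ Finset.range (n+1),
          ((1:ℝ)/2) ^ i * (V * min 1 (Real.exp ((2:ℝ) ^ (i+1) * Real.log 3 - L))) :=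
        Finset.sum_le_sum hstep3
    _ = V * ∑ i ∈ Finset.range (n+1),
          ((1:ℝ)/2) ^ i * min 1 (Real.exp ((2:ℝ) ^ (i+1) * Real.log 3 - L)) := hstep4
    _ ≤ V * (36 / (1 + L)) := mul_le_mul_of_nonneg_left hscal hV.le
    _ = 36 * (V / (1 + L)) := by ring

lemma fcoef_zero_fun (S : Finset J) : fcoef (0 : (J → Bool) → ℝ) S = 0 := by
  rw [fcoef, hcExp]
  simp

lemma hcVar_decomp (f : (J → Bool) → ℝ) :
    hcVar f = ∑ j : J, ∑ S ∈ Finset.univ.erase (∅ : Finset J),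
      fcoef (rhoD j f) S ^ 2 / S.card := by
  classical
  rw [hcVar_eq]
  have hpt : ∀ (j : J) (S : Finset J), fcoef (rhoD j f) S ^ 2 / (S.card : ℝ)
      = if j ∈ S then fcoef f S ^ 2 / (S.card : ℝ) else 0 := by
    intro j S
    rw [fcoef_rhoD]
    by_cases hj : j ∈ S <;> simp [hj]
  have h1 : ∀ j : J, (∑ S ∈ Finset.univ.erase (∅ : Finset J),
      fcoef (rhoD j f) S ^ 2 / (S.card : ℝ))
      = ∑ S ∈ Finset.univ.erase (∅ : Finset J),
          (if j ∈ S then fcoef f S ^ 2 / (S.card : ℝ) else 0) := by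
    intro j
    exact Finset.sum_congr rfl fun S _ => hpt j S
  rw [Finset.sum_congr rfl fun j _ => h1 j]
  rw [Finset.sum_comm]
  apply Finset.sum_congr rfl
  intro S hS
  have hSne : S ≠ ∅ := (Finset.mem_erase.mp hS).1
  have hcard : (0:ℝ) < (S.card : ℝ) := by
    have : S.card ≠ 0 := fun h => hSne (Finset.card_eq_zero.mp h)
    positivity
  rw [Finset.sum_ite_mem, Finset.univ_inter, Finset.sum_const, nsmul_eq_mul]
  field_simp

end Talagrand

open scoped Classical in
/-- Talagrand's inequality: there is a universal constant `C` such that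
for every finite `J` and every `f : {0,1}^J → ℝ`,
`Var(f) ≤ C Σ_j ‖ρ_j f‖₂² / (1 + log(‖ρ_j f‖₂/‖ρ_j f‖₁))`,
terms with `ρ_j f ≡ 0` being interpreted as `0`. -/
theorem stmt8 :
    ∃ C : ℝ, 0 < C ∧
      ∀ (J : Type) [Fintype J] [DecidableEq J] (f : (J → Bool) → ℝ),
        hcVar f ≤ C * ∑ j : J,
          if rhoD j f = 0 then 0
          else lqNorm 2 (rhoD j f) ^ 2 /
            (1 + Real.log (lqNorm 2 (rhoD j f) / lqNorm 1 (rhoD j f))) := by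
  refine ⟨36, by norm_num, ?_⟩
  intro J _ _ f
  classical
  rw [hcVar_decomp, Finset.mul_sum]
  apply Finset.sum_le_sum
  intro j _
  by_cases hj : rhoD j f = 0
  · rw [if_pos hj, mul_zero]
    have hz : ∀ S : Finset J, fcoef (rhoD j f) S = 0 := by
      intro S
      rw [hj]
      exact fcoef_zero_fun S
    apply le_of_eq
    apply Finset.sum_eq_zero
    intro S _
    rw [hz S]
    simp
  · rw [if_neg hj]
    exact key_lemma (rhoD j f) hj
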